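/- Let n ≥ 1 and set N = 2n+1. Then: P_up^{(0,0)}(N) ∩ P_up^{(1,0)}(N) = {blank_N, botright_N}; P_up^{(0,0)}(N) ∩ P_up^{(1,2)}(N) = {blank_N, botleft_N}; P_up^{(0,0)}(N) ∩ P_up^{(0,2)}(N) = {blank_N}; P_up^{(1,0)}(N) ∩ P_up^{(1,2)}(N) = {blank_N, top_N}; P_up^{(1,0)}(N) ∩ P_up^{(0,2)}(N) = {blank_N}; and P_up^{(1,2)}(N) ∩ P_up^{(0,2)}(N) = {blank_N}. -/

import Mathlib

/-- Whether the unit triangle at row `r`, column `c` of the Sierpiński triangle is filled: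
upward units `(r, 2j)` are filled iff `choose r j` is odd; downward units are unfilled. -/
def filled (r c : ℕ) : Bool :=
  decide (c % 2 = 0 ∧ Nat.choose r (c / 2) % 2 = 1)

/-- The upward pattern of size `n` at upward position `(r, c)`. -/
def upPattern (n r c : ℕ) : ℕ × ℕ → Bool := fun q =>
  if q.1 < n ∧ q.2 ≤ 2 * q.1 then filled (r + q.1) (c + q.2) else false

/-- The set of all upward patterns of size `n` occurring in the Sierpiński triangle. -/
def Pup (n : ℕ) : Set (ℕ × ℕ → Bool) :=
  { p | ∃ r c : ℕ, c % 2 = 0 ∧ c ≤ 2 * r ∧ p = upPattern n r c }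

/-- The downward pattern of size `n` at downward position `(r, c)`. -/
def downPattern (n r c : ℕ) : ℕ × ℕ → Bool := fun q =>
  if q.1 < n ∧ q.2 ≤ 2 * (n - 1 - q.1) then filled (r + q.1) (c + 2 * q.1 + q.2) else false

/-- The set of all downward patterns of size `n` occurring in the Sierpiński triangle. -/
def Pdown (n : ℕ) : Set (ℕ × ℕ → Bool) :=
  { p | ∃ r c : ℕ, c % 2 = 1 ∧ c + 2 * (n - 1) ≤ 2 * r ∧ p = downPattern n r c }

/-- The top-cut pattern of size `n` at upward position `(r, c)` (apex unit removed). -/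
def topCutPattern (n r c : ℕ) : ℕ × ℕ → Bool := fun q =>
  if 1 ≤ q.1 ∧ q.1 < n ∧ q.2 ≤ 2 * q.1 then filled (r + q.1) (c + q.2) else false

/-- The set of all top-cut patterns of size `n` occurring in the Sierpiński triangle. -/
def PtopCut (n : ℕ) : Set (ℕ × ℕ → Bool) :=
  { p | ∃ r c : ℕ, c % 2 = 0 ∧ c ≤ 2 * r ∧ p = topCutPattern n r c }

/-- The bottom-cut pattern of size `n` at upward position `(r, c)`
(both bottom corner units removed). -/
def botCutPattern (n r c : ℕ) : ℕ × ℕ → Bool := fun q =>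
  if (q.1 < n ∧ q.2 ≤ 2 * q.1) ∧ ¬(q.1 = n - 1 ∧ (q.2 = 0 ∨ q.2 = 2 * (n - 1)))
  then filled (r + q.1) (c + q.2) else false

/-- The set of all bottom-cut patterns of size `n` occurring in the Sierpiński triangle. -/
def PbotCut (n : ℕ) : Set (ℕ × ℕ → Bool) :=
  { p | ∃ r c : ℕ, c % 2 = 0 ∧ c ≤ 2 * r ∧ p = botCutPattern n r c }

/-- The fully-cut pattern of size `n` at upward position `(r, c)`
(all three corner units removed). -/
def fullyCutPattern (n r c : ℕ) : ℕ × ℕ → Bool := fun q =>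
  if (q.1 < n ∧ q.2 ≤ 2 * q.1) ∧ q ≠ (0, 0) ∧ ¬(q.1 = n - 1 ∧ (q.2 = 0 ∨ q.2 = 2 * (n - 1)))
  then filled (r + q.1) (c + q.2) else false

/-- The set of all fully-cut patterns of size `n` occurring in the Sierpiński triangle. -/
def PfullyCut (n : ℕ) : Set (ℕ × ℕ → Bool) :=
  { p | ∃ r c : ℕ, c % 2 = 0 ∧ c ≤ 2 * r ∧ p = fullyCutPattern n r c }

/-- Upward patterns of size `m` occurring inside the approximation `T_N`
(rows `0, …, 2^N - 1`). -/
def PupN (N m : ℕ) : Set (ℕ × ℕ → Bool) :=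
  { p | ∃ r c : ℕ, c % 2 = 0 ∧ c ≤ 2 * r ∧ r + m ≤ 2 ^ N ∧ p = upPattern m r c }

/-- Upward patterns of size `n` at positions with `r ≡ ρ [MOD 2]` and `c ≡ γ [MOD 4]`. -/
def PupRC (n ρ γ : ℕ) : Set (ℕ × ℕ → Bool) :=
  { p | ∃ r c : ℕ, c % 2 = 0 ∧ c ≤ 2 * r ∧ r % 2 = ρ ∧ c % 4 = γ ∧ p = upPattern n r c }

/-- Downward patterns of size `n` at positions with `r ≡ ρ [MOD 2]` and `c ≡ γ [MOD 4]`. -/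
def PdownRC (n ρ γ : ℕ) : Set (ℕ × ℕ → Bool) :=
  { p | ∃ r c : ℕ, c % 2 = 1 ∧ c + 2 * (n - 1) ≤ 2 * r ∧ r % 2 = ρ ∧ c % 4 = γ ∧
      p = downPattern n r c }

/-- Top-cut patterns of size `n` at positions with `r ≡ ρ [MOD 2]` and `c ≡ γ [MOD 4]`. -/
def PtopCutRC (n ρ γ : ℕ) : Set (ℕ × ℕ → Bool) :=
  { p | ∃ r c : ℕ, c % 2 = 0 ∧ c ≤ 2 * r ∧ r % 2 = ρ ∧ c % 4 = γ ∧ p = topCutPattern n r c }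

/-- Fully-cut patterns of size `n` at positions with `r ≡ ρ [MOD 2]` and `c ≡ γ [MOD 4]`. -/
def PfullyCutRC (n ρ γ : ℕ) : Set (ℕ × ℕ → Bool) :=
  { p | ∃ r c : ℕ, c % 2 = 0 ∧ c ≤ 2 * r ∧ r % 2 = ρ ∧ c % 4 = γ ∧ p = fullyCutPattern n r c }

/-- The everywhere-unfilled upward pattern. -/
def blankUp : ℕ × ℕ → Bool := fun _ => false

/-- The upward pattern that is filled exactly at the apex `(0, 0)`. -/
def topUp : ℕ × ℕ → Bool := fun q => decide (q = (0, 0))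

/-- The size-`N` upward pattern that is filled exactly at the bottom-left corner `(N-1, 0)`. -/
def botleftUp (N : ℕ) : ℕ × ℕ → Bool := fun q => decide (q = (N - 1, 0))

/-- The size-`N` upward pattern filled exactly at the bottom-right corner `(N-1, 2(N-1))`. -/
def botrightUp (N : ℕ) : ℕ × ℕ → Bool := fun q => decide (q = (N - 1, 2 * (N - 1)))

/-- The everywhere-unfilled downward pattern. -/
def blankDown : ℕ × ℕ → Bool := fun _ => false

/-- The size-`N` downward pattern filled exactly at the upward units along the top side:
positions `(0, m)` with `m` odd, `1 ≤ m ≤ 2N - 3`. -/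
def topsideDown (N : ℕ) : ℕ × ℕ → Bool := fun q =>
  decide (q.1 = 0 ∧ q.2 % 2 = 1 ∧ 1 ≤ q.2 ∧ q.2 ≤ 2 * N - 3)

/-- The size-`N` downward pattern filled exactly at the upward units along the left side:
positions `(k, 1)` with `0 ≤ k ≤ N - 2`. -/
def leftsideDown (N : ℕ) : ℕ × ℕ → Bool := fun q =>
  decide (q.2 = 1 ∧ q.1 ≤ N - 2)

/-- The size-`N` downward pattern filled exactly at the upward units along the right side:
positions `(k, 2(N-1-k) - 1)` with `0 ≤ k ≤ N - 2`. -/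
def rightsideDown (N : ℕ) : ℕ × ℕ → Bool := fun q =>
  decide (q.1 ≤ N - 2 ∧ q.2 = 2 * (N - 1 - q.1) - 1)

section SierpAux
open Nat

private lemma choose_mod_two (x y : ℕ) :
    choose x y % 2 = if y % 2 ≤ x % 2 then choose (x/2) (y/2) % 2 else 0 := by
  haveI : Fact (Nat.Prime 2) := ⟨Nat.prime_two⟩
  have h := @Choose.choose_modEq_choose_mod_mul_choose_div_nat x y 2 _
  have hx := Nat.mod_two_eq_zero_or_one x
  have hy := Nat.mod_two_eq_zero_or_one y
  unfold Nat.ModEq at h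
  rcases hx with hx | hx <;> rcases hy with hy | hy <;>
    simp [hx, hy, Nat.mul_mod] at h ⊢ <;> omega

private lemma cEE (u b : ℕ) : choose (2*u) (2*b) % 2 = choose u b % 2 := by
  rw [choose_mod_two]; simp [Nat.mul_mod_right, Nat.mul_div_cancel_left]
private lemma cEO (u b : ℕ) : choose (2*u) (2*b+1) % 2 = 0 := by
  rw [choose_mod_two]; simp [Nat.mul_mod_right, Nat.mul_add_mod]
private lemma cOE (u b : ℕ) : choose (2*u+1) (2*b) % 2 = choose u b % 2 := by
  rw [choose_mod_two]; simp [Nat.mul_mod_right, Nat.mul_add_mod, Nat.mul_div_cancel_left,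
    Nat.mul_add_div]
private lemma cOO (u b : ℕ) : choose (2*u+1) (2*b+1) % 2 = choose u b % 2 := by
  rw [choose_mod_two]; simp [Nat.mul_add_mod, Nat.mul_add_div]

private lemma key_pow : ∀ t m j : ℕ, m < 2^t → j < 2^t →
    choose (2^t + m) j % 2 = choose m j % 2 := by
  intro t
  induction t with
  | zero => intro m j hm hj; interval_cases m <;> interval_cases j <;> simp
  | succ t ih =>
    intro m j hm hj
    rw [choose_mod_two, choose_mod_two (x := m)]
    have h1 : 2^(t+1) = 2 * 2^t := by ring
    have h2 : (2^(t+1) + m) % 2 = m % 2 := by omega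
    have h3 : (2^(t+1) + m) / 2 = 2^t + m/2 := by omega
    rw [h2, h3]
    split
    · exact ih (m/2) (j/2) (by omega) (by omega)
    · rfl

private lemma key_corner : ∀ t m : ℕ, m < 2^t → choose (2^t + m) (2^t) % 2 = 1 := by
  intro t
  induction t with
  | zero => intro m hm; interval_cases m; simp
  | succ t ih =>
    intro m hm
    rw [choose_mod_two]
    have h1 : 2^(t+1) = 2 * 2^t := by ring
    have h2 : (2^(t+1) + m) % 2 = m % 2 := by omega
    have h3 : (2^(t+1) + m) / 2 = 2^t + m/2 := by omega
    have h4 : (2^(t+1)) % 2 = 0 := by omega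
    have h5 : (2^(t+1)) / 2 = 2^t := by omega
    rw [h2, h3, h4, h5, if_pos (by omega)]
    exact ih (m/2) (by omega)

private lemma key_pred : ∀ t a : ℕ, a < 2^t → choose (2^t - 1) a % 2 = 1 := by
  intro t
  induction t with
  | zero => intro a ha; interval_cases a; simp
  | succ t ih =>
    intro a ha
    rw [choose_mod_two]
    have h1 : 2^(t+1) = 2 * 2^t := by ring
    have h2 : (2^(t+1) - 1) % 2 = 1 := by omega
    have h3 : (2^(t+1) - 1) / 2 = 2^t - 1 := by omega
    rw [h2, h3, if_pos (by omega)]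
    exact ih (a/2) (by omega)

private lemma mod2_eq_of_iff {x y : ℕ} (h : (x % 2 = 1) ↔ (y % 2 = 1)) : x % 2 = y % 2 := by
  have hx := Nat.mod_two_eq_zero_or_one x
  have hy := Nat.mod_two_eq_zero_or_one y
  rcases hx with hx|hx <;> rcases hy with hy|hy <;> rw [hx, hy] at h ⊢ <;> tauto

private lemma Hgen {N r c r' c' : ℕ} (hc : c % 2 = 0) (hc' : c' % 2 = 0)
    (h : upPattern N r c = upPattern N r' c') {k i : ℕ} (hk : k < N) (hi : i ≤ k) :
    choose (r+k) (c/2+i) % 2 = choose (r'+k) (c'/2+i) % 2 := by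
  have T := congrFun h (k, 2*i)
  simp only [upPattern] at T
  rw [if_pos ⟨hk, by omega⟩, if_pos ⟨hk, by omega⟩] at T
  simp only [filled, decide_eq_decide] at T
  rw [show (c+2*i)/2 = c/2+i by omega, show (c'+2*i)/2 = c'/2 + i by omega] at T
  have h1 : (c+2*i) % 2 = 0 := by omega
  have h2 : (c'+2*i) % 2 = 0 := by omega
  simp only [h1, h2, true_and] at T
  exact mod2_eq_of_iff T

end SierpAux
section SierpShape
open Nat

private lemma shape_blank (n ρ ε u b : ℕ) (hρ : ρ ≤ 1) (hε : ε ≤ 1) (h : ¬(ρ = 0 ∧ ε = 1))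
    (hf : ∀ κ ι, ι ≤ κ → κ ≤ n → choose (u+κ) (b+ι) % 2 = 0) :
    upPattern (2*n+1) (2*u+ρ) (2*(2*b+ε)) = blankUp := by
  funext q
  obtain ⟨k, m⟩ := q
  simp only [upPattern, blankUp]
  split_ifs with hcond
  · obtain ⟨hk, hm⟩ := hcond
    simp only [filled, decide_eq_false_iff_not]
    rintro ⟨h1, h2⟩
    rw [show (2*(2*b+ε)+m)/2 = 2*b+ε+m/2 by omega, choose_mod_two] at h2
    split_ifs at h2 with hle
    · rw [show (2*u+ρ+k)/2 = u+(ρ+k)/2 by omega,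
         show (2*b+ε+m/2)/2 = b+(ε+m/2)/2 by omega] at h2
      have := hf ((ρ+k)/2) ((ε+m/2)/2) (by omega) (by omega)
      omega
  · rfl

private lemma shape_br (n u b : ℕ) (hv : choose (u+n) (b+n) % 2 = 1)
    (hf : ∀ κ ι, ι ≤ κ → κ ≤ n → ¬(κ = n ∧ ι = n) → choose (u+κ) (b+ι) % 2 = 0) :
    upPattern (2*n+1) (2*u) (2*(2*b)) = botrightUp (2*n+1) := by
  funext q
  obtain ⟨k, m⟩ := q
  simp only [upPattern, botrightUp, show 2*n+1-1 = 2*n by omega]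
  by_cases hq : k = 2*n ∧ m = 2*(2*n)
  · obtain ⟨rfl, rfl⟩ := hq
    rw [if_pos ⟨by omega, by omega⟩]
    simp only [filled, Prod.mk.injEq, and_self, decide_eq_true_eq]
    refine decide_eq_true ⟨by omega, ?_⟩
    rw [show (2*(2*b)+2*(2*n))/2 = 2*(b+n) by omega, show 2*u+2*n = 2*(u+n) by ring, cEE]
    exact hv
  · have hq' : ¬((k, m) = ((2*n : ℕ), (2*(2*n) : ℕ))) := by
      simp only [Prod.mk.injEq]; tauto
    rw [decide_eq_false hq']
    split_ifs with hcond
    · obtain ⟨hk, hm⟩ := hcond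
      simp only [filled, decide_eq_false_iff_not]
      rintro ⟨h1, h2⟩
      rw [show (2*(2*b)+m)/2 = 2*b+m/2 by omega, choose_mod_two] at h2
      split_ifs at h2 with hle
      · rw [show (2*u+k)/2 = u+k/2 by omega, show (2*b+m/2)/2 = b+(m/2)/2 by omega] at h2
        have := hf (k/2) ((m/2)/2) (by omega) (by omega) (by omega)
        omega
    · rfl

private lemma shape_bl (n u b : ℕ) (hv : choose (u+n) b % 2 = 1)
    (hf : ∀ κ ι, ι ≤ κ → κ ≤ n → ¬(κ = n ∧ ι = 0) → choose (u+κ) (b+ι) % 2 = 0) :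
    upPattern (2*n+1) (2*u) (2*(2*b)) = botleftUp (2*n+1) := by
  funext q
  obtain ⟨k, m⟩ := q
  simp only [upPattern, botleftUp, show 2*n+1-1 = 2*n by omega]
  by_cases hq : k = 2*n ∧ m = 0
  · obtain ⟨rfl, rfl⟩ := hq
    rw [if_pos ⟨by omega, by omega⟩]
    refine Eq.trans (decide_eq_true ⟨by omega, ?_⟩) (decide_eq_true rfl).symm
    rw [show (2*(2*b)+0)/2 = 2*b by omega, show 2*u+2*n = 2*(u+n) by ring,
      show (2*b) = 2*b+2*0 by ring, show 2*b+2*0 = 2*(b+0) by ring, cEE]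
    simpa using hv
  · have hq' : ¬((k, m) = ((2*n : ℕ), (0 : ℕ))) := by
      simp only [Prod.mk.injEq]; tauto
    rw [decide_eq_false hq']
    split_ifs with hcond
    · obtain ⟨hk, hm⟩ := hcond
      simp only [filled, decide_eq_false_iff_not]
      rintro ⟨h1, h2⟩
      rw [show (2*(2*b)+m)/2 = 2*b+m/2 by omega, choose_mod_two] at h2
      split_ifs at h2 with hle
      · rw [show (2*u+k)/2 = u+k/2 by omega, show (2*b+m/2)/2 = b+(m/2)/2 by omega] at h2
        have := hf (k/2) ((m/2)/2) (by omega) (by omega) (by omega)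
        omega
    · rfl

private lemma shape_top (n u b : ℕ) (hn : 1 ≤ n) (hv : choose u b % 2 = 1)
    (hf : ∀ κ ι, ι ≤ κ → κ ≤ n → ¬(κ = 0 ∧ ι = 0) → choose (u+κ) (b+ι) % 2 = 0) :
    upPattern (2*n+1) (2*u+1) (2*(2*b)) = topUp := by
  funext q
  obtain ⟨k, m⟩ := q
  simp only [upPattern, topUp]
  by_cases hq : k = 0 ∧ m = 0
  · obtain ⟨rfl, rfl⟩ := hq
    rw [if_pos ⟨by omega, by omega⟩]
    refine Eq.trans (decide_eq_true ⟨by omega, ?_⟩) (decide_eq_true rfl).symm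
    rw [show (2*(2*b)+0)/2 = 2*b by omega, show 2*u+1+0 = 2*u+1 by ring, cOE]
    exact hv
  · have hq' : ¬((k, m) = ((0 : ℕ), (0 : ℕ))) := by
      simp only [Prod.mk.injEq]; tauto
    rw [decide_eq_false hq']
    split_ifs with hcond
    · obtain ⟨hk, hm⟩ := hcond
      simp only [filled, decide_eq_false_iff_not]
      rintro ⟨h1, h2⟩
      rw [show (2*(2*b)+m)/2 = 2*b+m/2 by omega, choose_mod_two] at h2
      split_ifs at h2 with hle
      · rw [show (2*u+1+k)/2 = u+(1+k)/2 by omega,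
          show (2*b+m/2)/2 = b+(m/2)/2 by omega] at h2
        have := hf ((1+k)/2) ((m/2)/2) (by omega) (by omega) (by omega)
        omega
    · rfl

end SierpShape
section SierpZeros
open Nat

-- Case (0,0) ∩ (1,0)
private lemma zeros1 (n u b u' b' : ℕ)
    (H : ∀ k i, k < 2*n+1 → i ≤ k →
      choose (2*u+k) (2*b+i) % 2 = choose ((2*u'+1)+k) (2*b'+i) % 2) :
    ∀ κ ι, ι ≤ κ → κ ≤ n → ¬(κ = n ∧ ι = n) → choose (u+κ) (b+ι) % 2 = 0 := by
  have A : ∀ κ ι, ι ≤ κ → κ < n → choose (u+κ) (b+ι) % 2 = 0 := by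
    intro κ ι h1 h2
    have T := H (2*κ+1) (2*ι+1) (by omega) (by omega)
    rw [show 2*u+(2*κ+1) = 2*(u+κ)+1 by ring, show 2*b+(2*ι+1) = 2*(b+ι)+1 by ring,
        show (2*u'+1)+(2*κ+1) = 2*(u'+κ+1) by ring,
        show 2*b'+(2*ι+1) = 2*(b'+ι)+1 by ring, cOO, cEO] at T
    exact T
  have B : ∀ ι, ι < n → choose (u'+n) (b'+ι) % 2 = 0 := by
    intro ι h1
    have T := H (2*n) (2*ι+1) (by omega) (by omega)
    rw [show 2*u+2*n = 2*(u+n) by ring, show 2*b+(2*ι+1) = 2*(b+ι)+1 by ring,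
        show (2*u'+1)+2*n = 2*(u'+n)+1 by ring,
        show 2*b'+(2*ι+1) = 2*(b'+ι)+1 by ring, cEO, cOO] at T
    exact T.symm
  intro κ ι h1 h2 h3
  rcases Nat.lt_or_ge κ n with h | h
  · exact A κ ι h1 h
  · have hκ : κ = n := by omega
    have T := H (2*κ) (2*ι) (by omega) (by omega)
    rw [show 2*u+2*κ = 2*(u+κ) by ring, show 2*b+2*ι = 2*(b+ι) by ring,
        show (2*u'+1)+2*κ = 2*(u'+κ)+1 by ring, show 2*b'+2*ι = 2*(b'+ι) by ring,
        cEE, cOE] at T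
    rw [T, show u'+κ = u'+n by omega]
    exact B ι (by omega)

-- Case (0,0) ∩ (1,2)
private lemma zeros2 (n u b u' b' : ℕ)
    (H : ∀ k i, k < 2*n+1 → i ≤ k →
      choose (2*u+k) (2*b+i) % 2 = choose ((2*u'+1)+k) ((2*b'+1)+i) % 2) :
    ∀ κ ι, ι ≤ κ → κ ≤ n → ¬(κ = n ∧ ι = 0) → choose (u+κ) (b+ι) % 2 = 0 := by
  have A : ∀ κ ι, ι ≤ κ → κ < n → choose (u+κ) (b+ι) % 2 = 0 := by
    intro κ ι h1 h2
    have T := H (2*κ+1) (2*ι) (by omega) (by omega)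
    rw [show 2*u+(2*κ+1) = 2*(u+κ)+1 by ring, show 2*b+2*ι = 2*(b+ι) by ring,
        show (2*u'+1)+(2*κ+1) = 2*(u'+κ+1) by ring, show (2*b'+1)+2*ι = 2*(b'+ι)+1 by ring,
        cOE, cEO] at T
    exact T
  have B : ∀ κ ι, 1 ≤ ι → ι ≤ κ → κ ≤ n → choose (u'+κ) (b'+ι) % 2 = 0 := by
    intro κ ι h0 h1 h2
    obtain ⟨κ₁, rfl⟩ : ∃ κ₁, κ = κ₁ + 1 := ⟨κ - 1, by omega⟩
    obtain ⟨ι₁, rfl⟩ : ∃ ι₁, ι = ι₁ + 1 := ⟨ι - 1, by omega⟩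
    have T := H (2*κ₁+1) (2*ι₁+1) (by omega) (by omega)
    rw [show 2*u+(2*κ₁+1) = 2*(u+κ₁)+1 by ring, show 2*b+(2*ι₁+1) = 2*(b+ι₁)+1 by ring,
        show (2*u'+1)+(2*κ₁+1) = 2*(u'+(κ₁+1)) by ring,
        show (2*b'+1)+(2*ι₁+1) = 2*(b'+(ι₁+1)) by ring, cOO, cEE] at T
    rw [← T]
    exact A κ₁ ι₁ (by omega) (by omega)
  intro κ ι h1 h2 h3
  rcases Nat.lt_or_ge κ n with h | h
  · exact A κ ι h1 h
  · have hκ : κ = n := by omega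
    have T := H (2*κ) (2*ι) (by omega) (by omega)
    rw [show 2*u+2*κ = 2*(u+κ) by ring, show 2*b+2*ι = 2*(b+ι) by ring,
        show (2*u'+1)+2*κ = 2*(u'+κ)+1 by ring, show (2*b'+1)+2*ι = 2*(b'+ι)+1 by ring,
        cEE, cOO] at T
    rw [T]
    exact B κ ι (by omega) h1 (by omega)

-- Case (0,0) ∩ (0,2)
private lemma zeros3 (n u b u' b' : ℕ)
    (H : ∀ k i, k < 2*n+1 → i ≤ k →
      choose (2*u+k) (2*b+i) % 2 = choose (2*u'+k) ((2*b'+1)+i) % 2) :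
    ∀ κ ι, ι ≤ κ → κ ≤ n → choose (u+κ) (b+ι) % 2 = 0 := by
  intro κ ι h1 h2
  have T := H (2*κ) (2*ι) (by omega) (by omega)
  rw [show 2*u+2*κ = 2*(u+κ) by ring, show 2*b+2*ι = 2*(b+ι) by ring,
      show 2*u'+2*κ = 2*(u'+κ) by ring, show (2*b'+1)+2*ι = 2*(b'+ι)+1 by ring,
      cEE, cEO] at T
  exact T

-- Case (1,0) ∩ (1,2)
private lemma zeros4 (n u b u' b' : ℕ)
    (H : ∀ k i, k < 2*n+1 → i ≤ k →
      choose ((2*u+1)+k) (2*b+i) % 2 = choose ((2*u'+1)+k) ((2*b'+1)+i) % 2) :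
    ∀ κ ι, ι ≤ κ → κ ≤ n → ¬(κ = 0 ∧ ι = 0) → choose (u+κ) (b+ι) % 2 = 0 := by
  have A : ∀ κ ι, ι < κ → κ ≤ n → choose (u+κ) (b+ι) % 2 = 0 := by
    intro κ ι h1 h2
    obtain ⟨κ₁, rfl⟩ : ∃ κ₁, κ = κ₁ + 1 := ⟨κ - 1, by omega⟩
    have T := H (2*κ₁+1) (2*ι) (by omega) (by omega)
    rw [show (2*u+1)+(2*κ₁+1) = 2*(u+(κ₁+1)) by ring, show 2*b+2*ι = 2*(b+ι) by ring,
        show (2*u'+1)+(2*κ₁+1) = 2*(u'+κ₁+1) by ring,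
        show (2*b'+1)+2*ι = 2*(b'+ι)+1 by ring, cEE, cEO] at T
    exact T
  have B : ∀ κ ι, 1 ≤ ι → ι ≤ κ → κ ≤ n → choose (u'+κ) (b'+ι) % 2 = 0 := by
    intro κ ι h0 h1 h2
    obtain ⟨κ₁, rfl⟩ : ∃ κ₁, κ = κ₁ + 1 := ⟨κ - 1, by omega⟩
    obtain ⟨ι₁, rfl⟩ : ∃ ι₁, ι = ι₁ + 1 := ⟨ι - 1, by omega⟩
    have T := H (2*κ₁+1) (2*ι₁+1) (by omega) (by omega)
    rw [show (2*u+1)+(2*κ₁+1) = 2*(u+κ₁+1) by ring, show 2*b+(2*ι₁+1) = 2*(b+ι₁)+1 by ring,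
        show (2*u'+1)+(2*κ₁+1) = 2*(u'+(κ₁+1)) by ring,
        show (2*b'+1)+(2*ι₁+1) = 2*(b'+(ι₁+1)) by ring, cEO, cEE] at T
    exact T.symm
  intro κ ι h1 h2 h3
  rcases Nat.lt_or_ge ι κ with h | h
  · exact A κ ι h h2
  · have hικ : ι = κ := by omega
    subst hικ
    have T := H (2*ι) (2*ι) (by omega) (by omega)
    rw [show (2*u+1)+2*ι = 2*(u+ι)+1 by ring, show 2*b+2*ι = 2*(b+ι) by ring,
        show (2*u'+1)+2*ι = 2*(u'+ι)+1 by ring, show (2*b'+1)+2*ι = 2*(b'+ι)+1 by ring,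
        cOE, cOO] at T
    rw [T]
    exact B ι ι (by omega) (by omega) h2

-- Case (1,0) ∩ (0,2)
private lemma zeros5 (n u b u' b' : ℕ)
    (H : ∀ k i, k < 2*n+1 → i ≤ k →
      choose ((2*u+1)+k) (2*b+i) % 2 = choose (2*u'+k) ((2*b'+1)+i) % 2) :
    ∀ κ ι, ι ≤ κ → κ ≤ n → choose (u+κ) (b+ι) % 2 = 0 := by
  intro κ ι h1 h2
  have T := H (2*κ) (2*ι) (by omega) (by omega)
  rw [show (2*u+1)+2*κ = 2*(u+κ)+1 by ring, show 2*b+2*ι = 2*(b+ι) by ring,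
      show 2*u'+2*κ = 2*(u'+κ) by ring, show (2*b'+1)+2*ι = 2*(b'+ι)+1 by ring,
      cOE, cEO] at T
  exact T

-- Case (1,2) ∩ (0,2)
private lemma zeros6 (n u b u' b' : ℕ)
    (H : ∀ k i, k < 2*n+1 → i ≤ k →
      choose ((2*u+1)+k) ((2*b+1)+i) % 2 = choose (2*u'+k) ((2*b'+1)+i) % 2) :
    ∀ κ ι, ι ≤ κ → κ ≤ n → choose (u+κ) (b+ι) % 2 = 0 := by
  intro κ ι h1 h2
  have T := H (2*κ) (2*ι) (by omega) (by omega)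
  rw [show (2*u+1)+2*κ = 2*(u+κ)+1 by ring, show (2*b+1)+2*ι = 2*(b+ι)+1 by ring,
      show 2*u'+2*κ = 2*(u'+κ) by ring, show (2*b'+1)+2*ι = 2*(b'+ι)+1 by ring,
      cOO, cEO] at T
  exact T

end SierpZeros
section SierpMem
open Nat

private lemma upPattern_blank_of (N r c : ℕ) (hc : c % 2 = 0)
    (hcell : ∀ k i, k < N → i ≤ k → choose (r+k) (c/2+i) % 2 = 0) :
    upPattern N r c = blankUp := by
  funext q
  obtain ⟨k, m⟩ := q
  simp only [upPattern, blankUp]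
  split_ifs with hcond
  · obtain ⟨hk, hm⟩ := hcond
    simp only [filled, decide_eq_false_iff_not]
    rintro ⟨h1, h2⟩
    rw [show (c+m)/2 = c/2 + m/2 by omega] at h2
    have := hcell k (m/2) hk (by omega)
    omega
  · rfl

private lemma upPattern_point_of (N r c k₀ m₀ : ℕ) (hc : c % 2 = 0) (hm₀ : m₀ % 2 = 0)
    (hk₀ : k₀ < N) (hm₀' : m₀ ≤ 2*k₀)
    (hv : choose (r+k₀) (c/2+m₀/2) % 2 = 1)
    (hcell : ∀ k i, k < N → i ≤ k → ¬(k = k₀ ∧ i = m₀/2) → choose (r+k) (c/2+i) % 2 = 0) :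
    upPattern N r c = fun q => decide (q = (k₀, m₀)) := by
  funext q
  obtain ⟨k, m⟩ := q
  simp only [upPattern]
  by_cases hq : k = k₀ ∧ m = m₀
  · obtain ⟨rfl, rfl⟩ := hq
    rw [if_pos ⟨hk₀, hm₀'⟩]
    refine Eq.trans (decide_eq_true ⟨by omega, ?_⟩) (decide_eq_true rfl).symm
    rw [show (c+m)/2 = c/2+m/2 by omega]
    exact hv
  · have hq' : ¬((k, m) = ((k₀ : ℕ), (m₀ : ℕ))) := by simp only [Prod.mk.injEq]; tauto
    rw [decide_eq_false hq']
    split_ifs with hcond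
    · obtain ⟨hk, hm⟩ := hcond
      simp only [filled, decide_eq_false_iff_not]
      rintro ⟨h1, h2⟩
      rw [show (c+m)/2 = c/2+m/2 by omega] at h2
      have := hcell k (m/2) hk (by omega) (by omega)
      omega
    · rfl

private lemma pow_facts (n : ℕ) : 2*n+1 ≤ 2^(2*n) ∧ 2^(2*n+3) = 8*2^(2*n) ∧
    2^(2*n+3+1) = 16*2^(2*n) := by
  refine ⟨?_, by ring, by ring⟩
  have := Nat.lt_two_pow_self (n := 2*n)
  omega

private lemma blankMem (n ρ ε : ℕ) (hρ : ρ ≤ 1) (hε : ε ≤ 1) (hn : 1 ≤ n) :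
    blankUp ∈ PupRC (2*n+1) ρ (2*ε) := by
  obtain ⟨P1, P2, -⟩ := pow_facts n
  refine ⟨2^(2*n+3) + ρ, 2*(2*(2*n+1)+ε), by omega, by omega, by omega, by omega, ?_⟩
  refine (upPattern_blank_of _ _ _ (by omega) ?_).symm
  intro k i hk hi
  rw [show (2*(2*(2*n+1)+ε))/2 = 2*(2*n+1)+ε by omega,
      show 2^(2*n+3) + ρ + k = 2^(2*n+3) + (ρ+k) by ring,
      key_pow _ _ _ (by omega) (by omega),
      Nat.choose_eq_zero_of_lt (by omega)]

private lemma brMem (n ρ : ℕ) (hρ : ρ ≤ 1) (hn : 1 ≤ n) :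
    botrightUp (2*n+1) ∈ PupRC (2*n+1) ρ 0 := by
  obtain ⟨P1, P2, -⟩ := pow_facts n
  refine ⟨2^(2*n+3) + ρ, 2*(2^(2*n+3) - 2*n), by omega, by omega, by omega, by omega, ?_⟩
  have e : botrightUp (2*n+1) = fun q => decide (q = ((2*n : ℕ), (2*(2*n) : ℕ))) := by
    funext q
    simp only [botrightUp, show 2*n+1-1 = 2*n by omega]
  rw [e]
  refine (upPattern_point_of _ _ _ (2*n) (2*(2*n)) (by omega) (by omega) (by omega)
    (by omega) ?_ ?_).symm
  · rw [show (2*(2^(2*n+3) - 2*n))/2 = 2^(2*n+3) - 2*n by omega,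
        show 2^(2*n+3) + ρ + 2*n = 2^(2*n+3) + (ρ+2*n) by ring,
        show 2^(2*n+3) - 2*n + (2*(2*n))/2 = 2^(2*n+3) by omega]
    exact key_corner _ _ (by omega)
  · intro k i hk hi hne
    have hilt : i < 2*n := by omega
    rw [show (2*(2^(2*n+3) - 2*n))/2 = 2^(2*n+3) - 2*n by omega,
        show 2^(2*n+3) + ρ + k = 2^(2*n+3) + (ρ+k) by ring,
        show 2^(2*n+3) - 2*n + i = 2^(2*n+3) - 2*n + i by rfl,
        key_pow _ _ _ (by omega) (by omega),
        Nat.choose_eq_zero_of_lt (by omega)]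

private lemma blMem (n ε : ℕ) (hε : ε ≤ 1) (hn : 1 ≤ n) :
    botleftUp (2*n+1) ∈ PupRC (2*n+1) ε (2*ε) := by
  obtain ⟨P1, P2, P3⟩ := pow_facts n
  refine ⟨2^(2*n+3+1) + (2^(2*n+3) + ε - 2*n), 2*(2^(2*n+3) + ε),
    by omega, by omega, by omega, by omega, ?_⟩
  have e : botleftUp (2*n+1) = fun q => decide (q = ((2*n : ℕ), (0 : ℕ))) := by
    funext q
    simp only [botleftUp, show 2*n+1-1 = 2*n by omega]
  rw [e]
  refine (upPattern_point_of _ _ _ (2*n) 0 (by omega) (by omega) (by omega)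
    (by omega) ?_ ?_).symm
  · rw [show (2*(2^(2*n+3) + ε))/2 = 2^(2*n+3) + ε by omega,
        show 2^(2*n+3+1) + (2^(2*n+3) + ε - 2*n) + 2*n = 2^(2*n+3+1) + (2^(2*n+3) + ε)
          by omega,
        show 2^(2*n+3) + ε + 0/2 = 2^(2*n+3) + ε by omega,
        key_pow _ _ _ (by omega) (by omega), Nat.choose_self]
  · intro k i hk hi hne
    rw [show (2*(2^(2*n+3) + ε))/2 = 2^(2*n+3) + ε by omega,
        show 2^(2*n+3+1) + (2^(2*n+3) + ε - 2*n) + k = 2^(2*n+3+1) + (2^(2*n+3) + ε - 2*n + k)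
          by omega,
        key_pow _ _ _ (by omega) (by omega),
        Nat.choose_eq_zero_of_lt (by omega)]

private lemma topMem (n ε : ℕ) (hε : ε ≤ 1) (hn : 1 ≤ n) :
    topUp ∈ PupRC (2*n+1) 1 (2*ε) := by
  obtain ⟨P1, P2, -⟩ := pow_facts n
  refine ⟨2^(2*n+3) - 1, 2*(2*(2*n+1)+ε), by omega, by omega, by omega, by omega, ?_⟩
  have e : topUp = fun q => decide (q = ((0 : ℕ), (0 : ℕ))) := rfl
  rw [e]
  refine (upPattern_point_of _ _ _ 0 0 (by omega) (by omega) (by omega)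
    (by omega) ?_ ?_).symm
  · rw [show (2*(2*(2*n+1)+ε))/2 = 2*(2*n+1)+ε by omega,
        show 2^(2*n+3) - 1 + 0 = 2^(2*n+3) - 1 by rfl,
        show 2*(2*n+1)+ε + 0/2 = 2*(2*n+1)+ε by omega]
    exact key_pred _ _ (by omega)
  · intro k i hk hi hne
    have hk1 : 1 ≤ k := by omega
    rw [show (2*(2*(2*n+1)+ε))/2 = 2*(2*n+1)+ε by omega,
        show 2^(2*n+3) - 1 + k = 2^(2*n+3) + (k-1) by omega,
        key_pow _ _ _ (by omega) (by omega),
        Nat.choose_eq_zero_of_lt (by omega)]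

end SierpMem
section SierpMain
open Nat

private lemma main1 (n : ℕ) (hn : 1 ≤ n) :
    PupRC (2*n+1) 0 0 ∩ PupRC (2*n+1) 1 0 = {blankUp, botrightUp (2*n+1)} := by
  ext p
  simp only [Set.mem_inter_iff, Set.mem_insert_iff, Set.mem_singleton_iff]
  constructor
  · rintro ⟨⟨r, c, hc2, hcr, hr2, hc4, rfl⟩, ⟨r', c', hc2', hcr', hr2', hc4', hp'⟩⟩
    obtain ⟨u, rfl⟩ : ∃ u, r = 2*u := ⟨r/2, by omega⟩
    obtain ⟨b, rfl⟩ : ∃ b, c = 2*(2*b) := ⟨c/4, by omega⟩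
    obtain ⟨u', rfl⟩ : ∃ u', r' = 2*u'+1 := ⟨r'/2, by omega⟩
    obtain ⟨b', rfl⟩ : ∃ b', c' = 2*(2*b') := ⟨c'/4, by omega⟩
    have H : ∀ k i, k < 2*n+1 → i ≤ k →
        choose (2*u+k) (2*b+i) % 2 = choose ((2*u'+1)+k) (2*b'+i) % 2 := by
      intro k i hk hi
      have T := Hgen (by omega) (by omega) hp' hk hi
      rwa [show (2*(2*b))/2 = 2*b by omega, show (2*(2*b'))/2 = 2*b' by omega] at T
    have Z := zeros1 n u b u' b' H
    by_cases hv : choose (u+n) (b+n) % 2 = 1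
    · right
      exact shape_br n u b hv Z
    · left
      have hf : ∀ κ ι, ι ≤ κ → κ ≤ n → choose (u+κ) (b+ι) % 2 = 0 := by
        intro κ ι h1 h2
        by_cases hx : κ = n ∧ ι = n
        · have h0 := Nat.mod_two_eq_zero_or_one (choose (u+n) (b+n))
          rw [hx.1, hx.2]
          omega
        · exact Z κ ι h1 h2 hx
      simpa using shape_blank n 0 0 u b (by omega) (by omega) (by omega) hf
  · rintro (rfl | rfl)
    · exact ⟨by simpa using blankMem n 0 0 (by omega) (by omega) hn,
             by simpa using blankMem n 1 0 (by omega) (by omega) hn⟩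
    · exact ⟨brMem n 0 (by omega) hn, brMem n 1 (by omega) hn⟩

private lemma main2 (n : ℕ) (hn : 1 ≤ n) :
    PupRC (2*n+1) 0 0 ∩ PupRC (2*n+1) 1 2 = {blankUp, botleftUp (2*n+1)} := by
  ext p
  simp only [Set.mem_inter_iff, Set.mem_insert_iff, Set.mem_singleton_iff]
  constructor
  · rintro ⟨⟨r, c, hc2, hcr, hr2, hc4, rfl⟩, ⟨r', c', hc2', hcr', hr2', hc4', hp'⟩⟩
    obtain ⟨u, rfl⟩ : ∃ u, r = 2*u := ⟨r/2, by omega⟩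
    obtain ⟨b, rfl⟩ : ∃ b, c = 2*(2*b) := ⟨c/4, by omega⟩
    obtain ⟨u', rfl⟩ : ∃ u', r' = 2*u'+1 := ⟨r'/2, by omega⟩
    obtain ⟨b', rfl⟩ : ∃ b', c' = 2*(2*b'+1) := ⟨(c'-2)/4, by omega⟩
    have H : ∀ k i, k < 2*n+1 → i ≤ k →
        choose (2*u+k) (2*b+i) % 2 = choose ((2*u'+1)+k) ((2*b'+1)+i) % 2 := by
      intro k i hk hi
      have T := Hgen (by omega) (by omega) hp' hk hi
      rwa [show (2*(2*b))/2 = 2*b by omega, show (2*(2*b'+1))/2 = 2*b'+1 by omega] at T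
    have Z := zeros2 n u b u' b' H
    by_cases hv : choose (u+n) b % 2 = 1
    · right
      refine shape_bl n u b hv ?_
      exact fun κ ι h1 h2 h3 => Z κ ι h1 h2 h3
    · left
      have hf : ∀ κ ι, ι ≤ κ → κ ≤ n → choose (u+κ) (b+ι) % 2 = 0 := by
        intro κ ι h1 h2
        by_cases hx : κ = n ∧ ι = 0
        · have h0 := Nat.mod_two_eq_zero_or_one (choose (u+n) b)
          rw [hx.1, hx.2, Nat.add_zero]
          omega
        · exact Z κ ι h1 h2 hx
      simpa using shape_blank n 0 0 u b (by omega) (by omega) (by omega) hf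
  · rintro (rfl | rfl)
    · exact ⟨by simpa using blankMem n 0 0 (by omega) (by omega) hn,
             by simpa using blankMem n 1 1 (by omega) (by omega) hn⟩
    · exact ⟨by simpa using blMem n 0 (by omega) hn,
             by simpa using blMem n 1 (by omega) hn⟩

private lemma main3 (n : ℕ) (hn : 1 ≤ n) :
    PupRC (2*n+1) 0 0 ∩ PupRC (2*n+1) 0 2 = {blankUp} := by
  ext p
  simp only [Set.mem_inter_iff, Set.mem_singleton_iff]
  constructor
  · rintro ⟨⟨r, c, hc2, hcr, hr2, hc4, rfl⟩, ⟨r', c', hc2', hcr', hr2', hc4', hp'⟩⟩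
    obtain ⟨u, rfl⟩ : ∃ u, r = 2*u := ⟨r/2, by omega⟩
    obtain ⟨b, rfl⟩ : ∃ b, c = 2*(2*b) := ⟨c/4, by omega⟩
    obtain ⟨u', rfl⟩ : ∃ u', r' = 2*u' := ⟨r'/2, by omega⟩
    obtain ⟨b', rfl⟩ : ∃ b', c' = 2*(2*b'+1) := ⟨(c'-2)/4, by omega⟩
    have H : ∀ k i, k < 2*n+1 → i ≤ k →
        choose (2*u+k) (2*b+i) % 2 = choose (2*u'+k) ((2*b'+1)+i) % 2 := by
      intro k i hk hi
      have T := Hgen (by omega) (by omega) hp' hk hi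
      rwa [show (2*(2*b))/2 = 2*b by omega, show (2*(2*b'+1))/2 = 2*b'+1 by omega] at T
    have Z := zeros3 n u b u' b' H
    simpa using shape_blank n 0 0 u b (by omega) (by omega) (by omega) Z
  · rintro rfl
    exact ⟨by simpa using blankMem n 0 0 (by omega) (by omega) hn,
           by simpa using blankMem n 0 1 (by omega) (by omega) hn⟩

private lemma main4 (n : ℕ) (hn : 1 ≤ n) :
    PupRC (2*n+1) 1 0 ∩ PupRC (2*n+1) 1 2 = {blankUp, topUp} := by
  ext p
  simp only [Set.mem_inter_iff, Set.mem_insert_iff, Set.mem_singleton_iff]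
  constructor
  · rintro ⟨⟨r, c, hc2, hcr, hr2, hc4, rfl⟩, ⟨r', c', hc2', hcr', hr2', hc4', hp'⟩⟩
    obtain ⟨u, rfl⟩ : ∃ u, r = 2*u+1 := ⟨r/2, by omega⟩
    obtain ⟨b, rfl⟩ : ∃ b, c = 2*(2*b) := ⟨c/4, by omega⟩
    obtain ⟨u', rfl⟩ : ∃ u', r' = 2*u'+1 := ⟨r'/2, by omega⟩
    obtain ⟨b', rfl⟩ : ∃ b', c' = 2*(2*b'+1) := ⟨(c'-2)/4, by omega⟩
    have H : ∀ k i, k < 2*n+1 → i ≤ k →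
        choose ((2*u+1)+k) (2*b+i) % 2 = choose ((2*u'+1)+k) ((2*b'+1)+i) % 2 := by
      intro k i hk hi
      have T := Hgen (by omega) (by omega) hp' hk hi
      rwa [show (2*(2*b))/2 = 2*b by omega, show (2*(2*b'+1))/2 = 2*b'+1 by omega] at T
    have Z := zeros4 n u b u' b' H
    by_cases hv : choose u b % 2 = 1
    · right
      refine shape_top n u b hn ?_ ?_
      · exact hv
      · exact fun κ ι h1 h2 h3 => Z κ ι h1 h2 h3
    · left
      have hf : ∀ κ ι, ι ≤ κ → κ ≤ n → choose (u+κ) (b+ι) % 2 = 0 := by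
        intro κ ι h1 h2
        by_cases hx : κ = 0 ∧ ι = 0
        · have h0 := Nat.mod_two_eq_zero_or_one (choose u b)
          rw [hx.1, hx.2, Nat.add_zero, Nat.add_zero]
          omega
        · exact Z κ ι h1 h2 hx
      simpa using shape_blank n 1 0 u b (by omega) (by omega) (by omega) hf
  · rintro (rfl | rfl)
    · exact ⟨by simpa using blankMem n 1 0 (by omega) (by omega) hn,
             by simpa using blankMem n 1 1 (by omega) (by omega) hn⟩
    · exact ⟨by simpa using topMem n 0 (by omega) hn,
             by simpa using topMem n 1 (by omega) hn⟩

private lemma main5 (n : ℕ) (hn : 1 ≤ n) :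
    PupRC (2*n+1) 1 0 ∩ PupRC (2*n+1) 0 2 = {blankUp} := by
  ext p
  simp only [Set.mem_inter_iff, Set.mem_singleton_iff]
  constructor
  · rintro ⟨⟨r, c, hc2, hcr, hr2, hc4, rfl⟩, ⟨r', c', hc2', hcr', hr2', hc4', hp'⟩⟩
    obtain ⟨u, rfl⟩ : ∃ u, r = 2*u+1 := ⟨r/2, by omega⟩
    obtain ⟨b, rfl⟩ : ∃ b, c = 2*(2*b) := ⟨c/4, by omega⟩
    obtain ⟨u', rfl⟩ : ∃ u', r' = 2*u' := ⟨r'/2, by omega⟩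
    obtain ⟨b', rfl⟩ : ∃ b', c' = 2*(2*b'+1) := ⟨(c'-2)/4, by omega⟩
    have H : ∀ k i, k < 2*n+1 → i ≤ k →
        choose ((2*u+1)+k) (2*b+i) % 2 = choose (2*u'+k) ((2*b'+1)+i) % 2 := by
      intro k i hk hi
      have T := Hgen (by omega) (by omega) hp' hk hi
      rwa [show (2*(2*b))/2 = 2*b by omega, show (2*(2*b'+1))/2 = 2*b'+1 by omega] at T
    have Z := zeros5 n u b u' b' H
    simpa using shape_blank n 1 0 u b (by omega) (by omega) (by omega) Z
  · rintro rfl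
    exact ⟨by simpa using blankMem n 1 0 (by omega) (by omega) hn,
           by simpa using blankMem n 0 1 (by omega) (by omega) hn⟩

private lemma main6 (n : ℕ) (hn : 1 ≤ n) :
    PupRC (2*n+1) 1 2 ∩ PupRC (2*n+1) 0 2 = {blankUp} := by
  ext p
  simp only [Set.mem_inter_iff, Set.mem_singleton_iff]
  constructor
  · rintro ⟨⟨r, c, hc2, hcr, hr2, hc4, rfl⟩, ⟨r', c', hc2', hcr', hr2', hc4', hp'⟩⟩
    obtain ⟨u, rfl⟩ : ∃ u, r = 2*u+1 := ⟨r/2, by omega⟩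
    obtain ⟨b, rfl⟩ : ∃ b, c = 2*(2*b+1) := ⟨(c-2)/4, by omega⟩
    obtain ⟨u', rfl⟩ : ∃ u', r' = 2*u' := ⟨r'/2, by omega⟩
    obtain ⟨b', rfl⟩ : ∃ b', c' = 2*(2*b'+1) := ⟨(c'-2)/4, by omega⟩
    have H : ∀ k i, k < 2*n+1 → i ≤ k →
        choose ((2*u+1)+k) ((2*b+1)+i) % 2 = choose (2*u'+k) ((2*b'+1)+i) % 2 := by
      intro k i hk hi
      have T := Hgen (by omega) (by omega) hp' hk hi
      rwa [show (2*(2*b+1))/2 = 2*b+1 by omega, show (2*(2*b'+1))/2 = 2*b'+1 by omega] at T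
    have Z := zeros6 n u b u' b' H
    exact shape_blank n 1 1 u b (by omega) (by omega) (by omega) Z
  · rintro rfl
    exact ⟨by simpa using blankMem n 1 1 (by omega) (by omega) hn,
           by simpa using blankMem n 0 1 (by omega) (by omega) hn⟩

end SierpMain

theorem sierpinski_up_intersections_odd (n : ℕ) (hn : 1 ≤ n) :
    PupRC (2 * n + 1) 0 0 ∩ PupRC (2 * n + 1) 1 0 = {blankUp, botrightUp (2 * n + 1)} ∧
    PupRC (2 * n + 1) 0 0 ∩ PupRC (2 * n + 1) 1 2 = {blankUp, botleftUp (2 * n + 1)} ∧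
    PupRC (2 * n + 1) 0 0 ∩ PupRC (2 * n + 1) 0 2 = {blankUp} ∧
    PupRC (2 * n + 1) 1 0 ∩ PupRC (2 * n + 1) 1 2 = {blankUp, topUp} ∧
    PupRC (2 * n + 1) 1 0 ∩ PupRC (2 * n + 1) 0 2 = {blankUp} ∧
    PupRC (2 * n + 1) 1 2 ∩ PupRC (2 * n + 1) 0 2 = {blankUp} :=
  ⟨main1 n hn, main2 n hn, main3 n hn, main4 n hn, main5 n hn, main6 n hn⟩
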